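/- For any n ≥ 1, there is exactly one alternating permutation π in S_n with ipk(π) = 0. -/

import Mathlib

/-- The one-line notation of a permutation `π` of `{1,…,n}`, read as a function on 0-based
positions: `permWord π j = π_{j+1}` (values are 1-based; out-of-range positions give `0`). -/
def permWord {n : ℕ} (π : Equiv.Perm (Fin n)) (j : ℕ) : ℕ :=
  if h : j < n then ((π ⟨j, h⟩ : Fin n) : ℕ) + 1 else 0

/-- `π` contains `σ` as a consecutive pattern: some window of consecutive letters of `π`
has standardization `σ`, i.e. is order-isomorphic to the one-line word of `σ`. -/
def ContainsPat {n m : ℕ} (π : Equiv.Perm (Fin n)) (σ : Equiv.Perm (Fin m)) : Prop :=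
  ∃ i : ℕ, i + m ≤ n ∧ ∀ j k : Fin m,
    (permWord π (i + (j : ℕ)) < permWord π (i + (k : ℕ)) ↔ permWord σ j < permWord σ k)

/-- The number of peaks of `π`: 1-based indices `i` with `2 ≤ i ≤ n-1` and
`π_{i-1} < π_i > π_{i+1}`. -/
def pkCount {n : ℕ} (π : Equiv.Perm (Fin n)) : ℕ :=
  ((Finset.Icc 2 (n - 1)).filter fun i =>
    permWord π (i - 2) < permWord π (i - 1) ∧ permWord π i < permWord π (i - 1)).card

/-- The number of left peaks of `π`: 1-based indices `i ∈ [n-1]` that are peaks,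
or `i = 1` with `π_1 > π_2`. -/
def lpkCount {n : ℕ} (π : Equiv.Perm (Fin n)) : ℕ :=
  ((Finset.Icc 1 (n - 1)).filter fun i =>
    (2 ≤ i ∧ permWord π (i - 2) < permWord π (i - 1) ∧ permWord π i < permWord π (i - 1))
      ∨ (i = 1 ∧ permWord π 1 < permWord π 0)).card

/-- The number of peaks of `π⁻¹`. -/
def ipk {n : ℕ} (π : Equiv.Perm (Fin n)) : ℕ := pkCount π⁻¹

/-- The number of left peaks of `π⁻¹`. -/
def ilpk {n : ℕ} (π : Equiv.Perm (Fin n)) : ℕ := lpkCount π⁻¹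

/-- `π` is alternating: `π_1 < π_2 > π_3 < π_4 > ⋯`, i.e. for each 1-based `i ∈ [n-1]`,
`π_i < π_{i+1}` if `i` is odd and `π_i > π_{i+1}` if `i` is even. -/
def Alternating {n : ℕ} (π : Equiv.Perm (Fin n)) : Prop :=
  ∀ i : ℕ, 1 ≤ i → i ≤ n - 1 →
    if i % 2 = 1 then permWord π (i - 1) < permWord π i
    else permWord π i < permWord π (i - 1)

/-- For any `n ≥ 1`, there is exactly one alternating permutation in `S_n`
whose inverse has no peaks. -/
def myPerm (n : ℕ) : Equiv.Perm (Fin n) where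
  toFun p := ⟨if p.1 % 2 = 0 then (n-1)/2 - p.1/2 else (n-1)/2 + (p.1+1)/2,
    by have := p.2; split <;> omega⟩
  invFun v := ⟨if v.1 ≤ (n-1)/2 then 2*((n-1)/2 - v.1) else 2*(v.1 - (n-1)/2) - 1,
    by have := v.2; split <;> omega⟩
  left_inv p := by have := p.2; ext; simp only; split_ifs <;> omega
  right_inv v := by have := v.2; ext; simp only; split_ifs <;> omega

lemma myPerm_apply (n : ℕ) (p : Fin n) :
    (myPerm n p : ℕ) = if p.1 % 2 = 0 then (n-1)/2 - p.1/2 else (n-1)/2 + (p.1+1)/2 := rfl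

lemma myPerm_inv_apply (n : ℕ) (v : Fin n) :
    ((myPerm n)⁻¹ v : ℕ) = if v.1 ≤ (n-1)/2 then 2*((n-1)/2 - v.1) else 2*(v.1 - (n-1)/2) - 1 := rfl


section Helpers
variable {n : ℕ} (π : Equiv.Perm (Fin n))

lemma permWord_bounds {a : ℕ} (ha : a < n) : 1 ≤ permWord π a ∧ permWord π a ≤ n := by
  unfold permWord; rw [dif_pos ha]
  have := (π ⟨a, ha⟩).2; omega

lemma permWord_inj {a b : ℕ} (ha : a < n) (hb : b < n)
    (h : permWord π a = permWord π b) : a = b := by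
  unfold permWord at h; rw [dif_pos ha, dif_pos hb] at h
  have h2 : π ⟨a, ha⟩ = π ⟨b, hb⟩ := Fin.ext (by omega)
  have h3 := π.injective h2
  exact congrArg Fin.val h3

lemma permWord_link {a u : ℕ} (ha : a < n) (hu : u < n) :
    permWord π a = u + 1 ↔ permWord π⁻¹ u = a + 1 := by
  unfold permWord; rw [dif_pos ha, dif_pos hu]
  constructor
  · intro h
    have h2 : π ⟨a, ha⟩ = ⟨u, hu⟩ := Fin.ext (by simp only [Fin.val_mk]; omega)
    have h3 : π⁻¹ ⟨u, hu⟩ = ⟨a, ha⟩ := by rw [← h2]; simp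
    rw [h3]
  · intro h
    have h2 : π⁻¹ ⟨u, hu⟩ = ⟨a, ha⟩ := Fin.ext (by simp only [Fin.val_mk]; omega)
    have h3 : π ⟨a, ha⟩ = ⟨u, hu⟩ := by rw [← h2]; simp
    rw [h3]

lemma permWord_one_exists (hn : 1 ≤ n) : ∃ u, u < n ∧ permWord π⁻¹ u = 1 := by
  refine ⟨(π ⟨0, hn⟩).1, (π ⟨0, hn⟩).2, ?_⟩
  unfold permWord
  rw [dif_pos (π ⟨0, hn⟩).2]
  have h : (⟨(π ⟨0, hn⟩).1, (π ⟨0, hn⟩).2⟩ : Fin n) = π ⟨0, hn⟩ := rfl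
  rw [h]; simp

end Helpers

lemma myPerm_unique (n : ℕ) (hn : 1 ≤ n) (π : Equiv.Perm (Fin n))
    (halt : Alternating π) (hipk : ipk π = 0) : π = myPerm n := by
  set w : ℕ → ℕ := permWord π⁻¹ with hw
  set W : ℕ → ℕ := permWord π with hW
  -- no peaks
  unfold ipk pkCount at hipk
  rw [Finset.card_eq_zero, Finset.filter_eq_empty_iff] at hipk
  have hnp : ∀ j, j + 3 ≤ n → w j < w (j+1) → ¬ (w (j+2) < w (j+1)) := by
    intro j hj hasc hdesc
    have hmem : (j+2) ∈ Finset.Icc 2 (n-1) := Finset.mem_Icc.mpr ⟨by omega, by omega⟩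
    have := hipk hmem
    have e1 : j + 2 - 2 = j := by omega
    have e2 : j + 2 - 1 = j + 1 := by omega
    rw [e1, e2] at this
    exact this ⟨hasc, hdesc⟩
  -- ascent propagation
  have hprop : ∀ j, j + 3 ≤ n → w j < w (j+1) → w (j+1) < w (j+2) := by
    intro j hj hasc
    have h1 := hnp j hj hasc
    have h2 := permWord_inj π⁻¹ (show j+1 < n by omega) (show j+2 < n by omega)
    rw [← hw] at h2
    rcases Nat.lt_trichotomy (w (j+1)) (w (j+2)) with h | h | h
    · exact h
    · exact absurd (h2 h) (by omega)
    · exact absurd h h1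
  -- the valley position t
  obtain ⟨t, ht1, hdec0, hinc0⟩ :
      ∃ t, t ≤ n - 1 ∧ (∀ j, j < t → ¬ (w j < w (j+1))) ∧
        (∀ j, t ≤ j → j + 2 ≤ n → w j < w (j+1)) := by
    by_cases hex : ∃ j, j + 2 ≤ n ∧ w j < w (j+1)
    · refine ⟨Nat.find hex, by have := (Nat.find_spec hex).1; omega, ?_, ?_⟩
      · intro j hj hasc
        have hj2 : j + 2 ≤ n := by have := (Nat.find_spec hex).1; omega
        exact Nat.find_min hex hj ⟨hj2, hasc⟩
      · intro j hj
        induction j, hj using Nat.le_induction with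
        | base => intro _; exact (Nat.find_spec hex).2
        | succ k hk ih => intro h2; exact hprop k (by omega) (ih (by omega))
    · refine ⟨n - 1, le_refl _, ?_, ?_⟩
      · intro j hj hasc
        exact hex ⟨j, by omega, hasc⟩
      · intro j hj hj2; omega
  -- strict descents before t
  have hdec : ∀ j, j < t → w (j+1) < w j := by
    intro j hj
    have h1 := hdec0 j hj
    have h2 := permWord_inj π⁻¹ (show j < n by omega) (show j+1 < n by omega)
    rw [← hw] at h2
    rcases Nat.lt_trichotomy (w j) (w (j+1)) with h | h | h
    · exact absurd h h1
    · exact absurd (h2 h) (by omega)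
    · exact h
  -- chains
  have hdecC : ∀ b a, a < b → b ≤ t → w b < w a := by
    intro b
    induction b with
    | zero => omega
    | succ c ih =>
      intro a hab hbt
      rcases Nat.lt_or_ge a c with h | h
      · exact lt_trans (hdec c (by omega)) (ih a h (by omega))
      · have : a = c := by omega
        subst this
        exact hdec a (by omega)
  have hincC : ∀ b a, t ≤ a → a < b → b < n → w a < w b := by
    intro b
    induction b with
    | zero => omega
    | succ c ih =>
      intro a ha hab hbn
      rcases Nat.lt_or_ge a c with h | h
      · exact lt_trans (ih a ha h (by omega)) (hinc0 c (by omega) (by omega))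
      · have : a = c := by omega
        subst this
        exact hinc0 a ha (by omega)
  have htn : t < n := by omega
  -- w t = 1
  have hwt : w t = 1 := by
    obtain ⟨u, hu, hu1⟩ := permWord_one_exists π hn
    rw [← hw] at hu1
    rcases Nat.lt_trichotomy u t with h | h | h
    · have h2 := hdec u h
      have h3 := (permWord_bounds π⁻¹ (show u+1 < n by omega)).1
      rw [← hw] at h3; omega
    · rw [← h]; exact hu1
    · have h2 := hincC u t (le_refl _) h hu
      have h3 := (permWord_bounds π⁻¹ htn).1
      rw [← hw] at h3; omega
  -- alternation restated
  have halt' : ∀ p, 1 ≤ p → p < n →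
      (p % 2 = 1 → W (p-1) < W p) ∧ (p % 2 = 0 → W p < W (p-1)) := by
    intro p h1 hp
    have h := halt p h1 (by omega)
    rw [← hW] at h
    constructor
    · intro hpar; rw [if_pos hpar] at h; exact h
    · intro hpar; rw [if_neg (by omega)] at h; exact h
  -- bounds and injectivity for W
  have hWb : ∀ a, a < n → 1 ≤ W a ∧ W a ≤ n := fun a ha => by
    have := permWord_bounds π ha; rw [← hW] at this; exact this
  have hwb : ∀ a, a < n → 1 ≤ w a ∧ w a ≤ n := fun a ha => by
    have := permWord_bounds π⁻¹ ha; rw [← hw] at this; exact this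
  have hWinj : ∀ a b, a < n → b < n → W a = W b → a = b := fun a b ha hb h => by
    have h2 := permWord_inj π ha hb; rw [← hW] at h2; exact h2 h
  have hlink : ∀ a u, a < n → u < n → (W a = u + 1 ↔ w u = a + 1) := fun a u ha hu => by
    have := permWord_link π ha hu; rw [← hW, ← hw] at this; exact this
  -- main induction
  have hmain : ∀ p, p < n →
      (p % 2 = 0 → W p + p / 2 = t + 1) ∧ (p % 2 = 1 → W p = t + 1 + (p+1)/2) := by
    intro p
    induction p using Nat.strong_induction_on with
    | _ p IH =>
      intro hp
      rcases Nat.eq_zero_or_pos p with h0 | h1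
      · subst h0
        constructor
        · intro _
          have := (hlink 0 t (by omega) htn).mpr hwt
          omega
        · omega
      -- p ≥ 1
      have hpn : p - 1 < n := by omega
      have hvb := hWb p hp
      have hvb' := hWb (p-1) hpn
      rcases Nat.even_or_odd p with hev | hod
      · -- p even, p ≥ 2
        have hpar : p % 2 = 0 := Nat.even_iff.mp hev
        have hp2 : 2 ≤ p := by omega
        refine ⟨fun _ => ?_, by omega⟩
        have hprev : W (p-1) = t + 1 + p/2 := by
          have := (IH (p-1) (by omega) hpn).2 (by omega)
          have e : (p - 1 + 1) / 2 = p / 2 := by omega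
          omega
        have hgt : W p < W (p-1) := (halt' p (by omega) hp).2 hpar
        set v1 := W p with hv1
        by_cases hvl : t + 2 ≤ v1
        · -- large value: must coincide with earlier odd position
          exfalso
          have hq : 2*(v1 - (t+1)) - 1 < p := by omega
          have hqn : 2*(v1 - (t+1)) - 1 < n := by omega
          have hqodd : (2*(v1 - (t+1)) - 1) % 2 = 1 := by omega
          have := (IH _ hq hqn).2 hqodd
          have : W (2*(v1 - (t+1)) - 1) = v1 := by omega
          have := hWinj _ _ hqn hp this
          omega
        · -- small value
          by_cases hgt2 : t + 1 < v1 + p/2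
          · exfalso
            have hq : 2*(t+1-v1) < p := by omega
            have hqn : 2*(t+1-v1) < n := by omega
            have := (IH _ hq hqn).1 (by omega)
            have : W (2*(t+1-v1)) = v1 := by omega
            have := hWinj _ _ hqn hp this
            omega
          by_cases heq : v1 + p/2 = t + 1
          · exact heq
          exfalso
          -- v1 + p/2 < t + 1 : use monotonicity
          have hlt2 : v1 + p/2 < t + 1 := by omega
          set u1 := t + 1 - p/2 with hu1
          have hu1n : u1 - 1 < n := by omega
          have hv1n : v1 - 1 < n := by omega
          have hposv : w (v1 - 1) = p + 1 := by
            have := (hlink p (v1-1) hp hv1n).mp (by omega)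
            exact this
          have hmono : w (u1 - 1) < w (v1 - 1) :=
            hdecC (u1-1) (v1-1) (by omega) (by omega)
          set q := w (u1 - 1) - 1 with hqdef
          have hwu := hwb (u1-1) hu1n
          have hq : q < p := by omega
          have hqn : q < n := by omega
          have hWq : W q = u1 := by
            have := (hlink q (u1-1) hqn hu1n).mpr (by omega)
            omega
          have := IH q hq hqn
          rcases Nat.even_or_odd q with hqe | hqo
          · have := this.1 (Nat.even_iff.mp hqe)
            omega
          · have := this.2 (Nat.odd_iff.mp hqo)
            omega
      · -- p odd
        have hpar : p % 2 = 1 := Nat.odd_iff.mp hod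
        refine ⟨by omega, fun _ => ?_⟩
        have hprev : W (p-1) + (p-1)/2 = t + 1 := by
          exact (IH (p-1) (by omega) hpn).1 (by omega)
        have hlt : W (p-1) < W p := (halt' p (by omega) hp).1 hpar
        set v1 := W p with hv1
        by_cases hvs : v1 ≤ t + 1
        · -- small value: contradiction
          exfalso
          have hq : 2*(t+1-v1) < p := by omega
          have hqn : 2*(t+1-v1) < n := by omega
          have := (IH _ hq hqn).1 (by omega)
          have : W (2*(t+1-v1)) = v1 := by omega
          have := hWinj _ _ hqn hp this
          omega
        · -- large value
          by_cases hlt2 : v1 < t + 1 + (p+1)/2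
          · exfalso
            have hq : 2*(v1-(t+1)) - 1 < p := by omega
            have hqn : 2*(v1-(t+1)) - 1 < n := by omega
            have hqodd : (2*(v1-(t+1)) - 1) % 2 = 1 := by omega
            have := (IH _ hq hqn).2 hqodd
            have : W (2*(v1-(t+1)) - 1) = v1 := by omega
            have := hWinj _ _ hqn hp this
            omega
          by_cases heq : v1 = t + 1 + (p+1)/2
          · exact heq
          exfalso
          have hgt2 : t + 1 + (p+1)/2 < v1 := by omega
          set u1 := t + 1 + (p+1)/2 with hu1
          have hu1n : u1 - 1 < n := by omega
          have hv1n : v1 - 1 < n := by omega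
          have hposv : w (v1 - 1) = p + 1 := (hlink p (v1-1) hp hv1n).mp (by omega)
          have hmono : w (u1 - 1) < w (v1 - 1) :=
            hincC (v1-1) (u1-1) (by omega) (by omega) hv1n
          set q := w (u1 - 1) - 1 with hqdef
          have hwu := hwb (u1-1) hu1n
          have hq : q < p := by omega
          have hqn : q < n := by omega
          have hWq : W q = u1 := by
            have := (hlink q (u1-1) hqn hu1n).mpr (by omega)
            omega
          have := IH q hq hqn
          rcases Nat.even_or_odd q with hqe | hqo
          · have := this.1 (Nat.even_iff.mp hqe)
            omega
          · have := this.2 (Nat.odd_iff.mp hqo)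
            omega
  -- pin down t
  have hT : t = (n-1)/2 := by
    rcases Nat.eq_or_lt_of_le hn with h1 | h2
    · omega
    · have hA := hmain (n-1) (by omega)
      have hB := hmain (n-2) (by omega)
      have hAb := hWb (n-1) (by omega)
      have hBb := hWb (n-2) (by omega)
      by_cases hpar : (n-1) % 2 = 0
      · have e1 := hA.1 hpar
        have e2 := hB.2 (by omega)
        omega
      · have e1 := hA.2 (by omega)
        have e2 := hB.1 (by omega)
        omega
  -- conclude
  apply Equiv.ext
  intro x
  apply Fin.ext
  have hx := x.2
  have hval : W x.1 = (π x).1 + 1 := by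
    rw [hW]; unfold permWord; rw [dif_pos x.2]
  have hm := hmain x.1 x.2
  show ((π x : Fin n) : ℕ) =
    if x.1 % 2 = 0 then (n-1)/2 - x.1/2 else (n-1)/2 + (x.1+1)/2
  by_cases hpar : x.1 % 2 = 0
  · have := hm.1 hpar
    rw [if_pos hpar]
    omega
  · have := hm.2 (by omega)
    rw [if_neg hpar]
    omega


lemma myPerm_alt (n : ℕ) : Alternating (myPerm n) := by
  intro i h1 h2
  have hi : i < n := by omega
  have hi1 : i - 1 < n := by omega
  unfold permWord
  rw [dif_pos hi, dif_pos hi1, myPerm_apply, myPerm_apply]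
  simp only
  split_ifs <;> omega

lemma myPerm_ipk (n : ℕ) : ipk (myPerm n) = 0 := by
  unfold ipk pkCount
  rw [Finset.card_eq_zero, Finset.filter_eq_empty_iff]
  intro i hi
  rw [Finset.mem_Icc] at hi
  have h0 : i < n := by omega
  have h1 : i - 1 < n := by omega
  have h2 : i - 2 < n := by omega
  unfold permWord
  rw [dif_pos h0, dif_pos h1, dif_pos h2, myPerm_inv_apply, myPerm_inv_apply, myPerm_inv_apply]
  simp only [Fin.val_mk]
  split_ifs <;> omega

theorem stmt4 (n : ℕ) (hn : 1 ≤ n) :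
    ∃! π : Equiv.Perm (Fin n), Alternating π ∧ ipk π = 0 :=
  ⟨myPerm n, ⟨myPerm_alt n, myPerm_ipk n⟩, fun π h => myPerm_unique n hn π h.1 h.2⟩
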